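/- arXiv:2212.03931 — 9 statements merged into one kernel-verified Lean document; each statement's English description precedes it below -/
import Mathlib

section
/- Let X be a finite set with default d ∈ X and D a collection of subsets of X each containing d, and let p_d : D → [0,1] be a default-choice data set. Then p_d is consistent with the random utility model if and only if there exists a probability distribution ν on the (finite) set of rationalizable deterministic choice functions on D such that for every A ∈ D, p_d(A) equals the ν-probability of the set of deterministic choice functions c with c(A) = d. -/
open scoped Classical

/-- `x` is the unique maximizer of `u` on the finite set `A`. -/
def IsUniqueMax {α : Type*} (u : α → ℝ) (A : Finset α) (x : α) : Prop :=
  x ∈ A ∧ ∀ y ∈ A, y ≠ x → u y < u x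

/-- The default-choice data set `p` on the collection `D` of choice sets (each containing
the default `d`) is consistent with the random utility model: there is a finite collection
of injective utility functions and a probability distribution over them such that `p A` is
the probability that `d` is the unique maximizer of the realized utility on `A`. -/
def ConsistentRUMDefault {α : Type*} (d : α) (D : Finset (Finset α))
    (p : Finset α → ℝ) : Prop :=
  ∃ (n : ℕ) (u : Fin n → α → ℝ) (ρ : Fin n → ℝ),
    (∀ i, Function.Injective (u i)) ∧
    (∀ i, 0 ≤ ρ i) ∧ (∑ i, ρ i = 1) ∧
    ∀ A ∈ D, p A = ∑ i ∈ Finset.univ.filter (fun i => IsUniqueMax (u i) A d), ρ i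

/-- A deterministic choice function on `D` is rationalizable if there is a strict linear
order on `α` such that on each `A ∈ D` it picks the greatest element of `A`. -/
def Rationalizable {α : Type*} (D : Finset (Finset α)) (c : Finset α → α) : Prop :=
  (∀ A ∈ D, c A ∈ A) ∧
    ∃ r : α → α → Prop, IsStrictTotalOrder α r ∧
      ∀ A ∈ D, ∀ y ∈ A, y ≠ c A → r (c A) y

/-- Unique maximizers are unique. -/
lemma uniqueMax_eq {α : Type*} {u : α → ℝ} {A : Finset α} {x y : α}
    (hx : IsUniqueMax u A x) (hy : IsUniqueMax u A y) : x = y := by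
  by_contra h
  exact lt_asymm (hx.2 y hy.1 (fun he => h he.symm)) (hy.2 x hx.1 h)

/-- The chosen maximizer of `u` on `A` (or `d` if `A` is empty). -/
noncomputable def cOf {α : Type*} (u : α → ℝ) (d : α) (A : Finset α) : α :=
  if h : A.Nonempty then (A.exists_max_image u h).choose else d

lemma cOf_isUniqueMax {α : Type*} {u : α → ℝ} (hu : Function.Injective u) (d : α)
    {A : Finset α} (h : A.Nonempty) : IsUniqueMax u A (cOf u d A) := by
  rw [cOf, dif_pos h]
  obtain ⟨hb, hmax⟩ := (A.exists_max_image u h).choose_spec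
  refine ⟨hb, fun y hy hne => ?_⟩
  exact lt_of_le_of_ne (hmax y hy) (fun he => hne (hu he))

/-- The rank of `x` under a strict total order: number of elements it beats. -/
noncomputable def rk {α : Type*} [Fintype α] (r : α → α → Prop) (x : α) : ℝ :=
  ((Finset.univ.filter fun z => r x z).card : ℝ)

lemma rk_lt {α : Type*} [Fintype α] {r : α → α → Prop} (hr : IsStrictTotalOrder α r)
    {a b : α} (hab : r a b) : rk r b < rk r a := by
  have : (Finset.univ.filter fun z => r b z) ⊂ (Finset.univ.filter fun z => r a z) := by
    rw [Finset.ssubset_iff_of_subset]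
    · exact ⟨b, by simp [hab], by simp [fun h => (hr.irrefl b) h]⟩
    · intro z hz
      simp only [Finset.mem_filter, Finset.mem_univ, true_and] at hz ⊢
      exact hr.trans _ _ _ hab hz
  unfold rk
  exact_mod_cast Finset.card_lt_card this

lemma rk_injective {α : Type*} [Fintype α] {r : α → α → Prop}
    (hr : IsStrictTotalOrder α r) : Function.Injective (rk r) := by
  intro a b h
  by_contra hne
  rcases (by haveI := hr; exact trichotomous_of r a b : r a b ∨ a = b ∨ r b a) with hab | hab | hab
  · exact absurd h (ne_of_gt (rk_lt hr hab))
  · exact hne hab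
  · exact absurd h (ne_of_lt (rk_lt hr hab))

/-- the default-choice data set `p_d` is consistent with RUM iff there is a
probability distribution `ν` on the (finite) set of rationalizable deterministic choice
functions on `D` such that for every `A ∈ D`, `p_d A` is the `ν`-probability of
`{c : c A = d}`. -/
theorem mcfadden_richter_default {α : Type*} [Fintype α] [DecidableEq α]
    (d : α) (D : Finset (Finset α)) (hd : ∀ A ∈ D, d ∈ A)
    (p : Finset α → ℝ) (hp : ∀ A ∈ D, p A ∈ Set.Icc (0 : ℝ) 1) :
    ConsistentRUMDefault d D p ↔
      ∃ ν : {c : Finset α → α // Rationalizable D c} → ℝ,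
        (∀ c, 0 ≤ ν c) ∧ (∑ c, ν c = 1) ∧
        ∀ A ∈ D,
          p A = ∑ c ∈ Finset.univ.filter
            (fun c : {c : Finset α → α // Rationalizable D c} => c.val A = d), ν c := by
  set S := {c : Finset α → α // Rationalizable D c}
  constructor
  · rintro ⟨n, u, ρ, hui, hρ0, hρ1, hpA⟩
    -- deterministic choice function induced by each utility
    set cf : Fin n → Finset α → α := fun i => cOf (u i) d with hcf
    have hrat : ∀ i, Rationalizable D (cf i) := by
      intro i
      have hne : ∀ A ∈ D, A.Nonempty := fun A hA => ⟨d, hd A hA⟩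
      refine ⟨fun A hA => (cOf_isUniqueMax (hui i) d (hne A hA)).1,
        fun x y => u i y < u i x, ?_, ?_⟩
      · haveI : IsTrichotomous α (fun x y : α => u i y < u i x) := ⟨fun a b => by
          rcases lt_trichotomy (u i a) (u i b) with h | h | h
          · exact fun _ h2 => absurd h h2
          · exact fun _ _ => hui i h
          · exact fun h1 _ => absurd h h1⟩
        haveI : IsIrrefl α (fun x y : α => u i y < u i x) := ⟨fun a => lt_irrefl _⟩
        haveI : IsTrans α (fun x y : α => u i y < u i x) := ⟨fun a b c h1 h2 => lt_trans h2 h1⟩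
        haveI : IsStrictOrder α (fun x y : α => u i y < u i x) := ⟨⟩
        exact ⟨⟩
      · intro A hA y hy hney
        exact (cOf_isUniqueMax (hui i) d (hne A hA)).2 y hy hney
    set g : Fin n → S := fun i => ⟨cf i, hrat i⟩ with hg
    have key : ∀ i, ∀ A ∈ D, (IsUniqueMax (u i) A d ↔ cf i A = d) := by
      intro i A hA
      have hne : A.Nonempty := ⟨d, hd A hA⟩
      have hmax := cOf_isUniqueMax (hui i) d hne
      constructor
      · intro h; exact uniqueMax_eq hmax h
      · intro h; rw [← h]; exact hmax
    refine ⟨fun c => ∑ i ∈ Finset.univ.filter (fun i => g i = c), ρ i,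
      fun c => Finset.sum_nonneg (fun i _ => hρ0 i), ?_, ?_⟩
    · rw [Finset.sum_fiberwise_eq_sum_filter Finset.univ Finset.univ g ρ]
      simpa using hρ1
    · intro A hA
      rw [hpA A hA, Finset.sum_fiberwise_eq_sum_filter Finset.univ
        (Finset.univ.filter fun c : S => c.val A = d) g ρ]
      refine Finset.sum_congr ?_ (fun _ _ => rfl)
      ext i
      simp only [Finset.mem_filter, Finset.mem_univ, true_and]
      rw [key i A hA]
  · rintro ⟨ν, hν0, hν1, hνp⟩
    -- extract orders and build utilities
    have hrS : ∀ c : S, ∃ r : α → α → Prop, IsStrictTotalOrder α r ∧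
        ∀ A ∈ D, ∀ y ∈ A, y ≠ c.1 A → r (c.1 A) y := fun c => c.2.2
    choose r hr1 hr2 using hrS
    set u : S → α → ℝ := fun c => rk (r c) with hu
    have key : ∀ c : S, ∀ A ∈ D, (IsUniqueMax (u c) A d ↔ c.1 A = d) := by
      intro c A hA
      constructor
      · intro h
        by_contra hne
        have h1 : u c d < u c (c.1 A) :=
          rk_lt (hr1 c) (hr2 c A hA d (hd A hA) (fun he => hne he.symm))
        have h2 : u c (c.1 A) < u c d := h.2 (c.1 A) (c.2.1 A hA) hne
        exact lt_asymm h1 h2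
      · intro h
        refine ⟨hd A hA, fun y hy hney => ?_⟩
        have hyc : y ≠ c.1 A := by rw [h]; exact hney
        have := rk_lt (hr1 c) (hr2 c A hA y hy hyc)
        rwa [h] at this
    let e := (Fintype.equivFin S).symm
    refine ⟨Fintype.card S, fun i => u (e i), fun i => ν (e i),
      fun i => rk_injective (hr1 (e i)), fun i => hν0 (e i), ?_, ?_⟩
    · rw [Equiv.sum_comp e ν]; exact hν1
    · intro A hA
      rw [hνp A hA, Finset.sum_filter, Finset.sum_filter,
        ← Equiv.sum_comp e (fun c => if c.val A = d then ν c else 0)]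
      apply Finset.sum_congr rfl
      intro i _
      by_cases h : (e i).val A = d
      · rw [if_pos h, if_pos ((key (e i) A hA).2 h)]
      · rw [if_neg h, if_neg (fun hm => h ((key (e i) A hA).1 hm))]
end

section
/- Let X be a finite set with default d ∈ X, let D be a collection of subsets of X each containing d with X ∈ D, and let p_d : D → [0,1] be a default-choice data set whose restriction to D \ {X} is consistent with the random utility model. Then p_d^RUM(X) equals the maximum, over all probability distributions ν on the set of rationalizable deterministic choice functions on D satisfying, for every A ∈ D \ {X}, that the ν-probability of {c : c(A) = d} equals p_d(A), of the ν-probability of {c : c(X) = d}; in particular this maximum is attained. -/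
open scoped Classical

/-- The RUM bound `p_d^RUM(X)`: the supremum of all `x ∈ [0,1]` such that the data set
that agrees with `p` away from the grand set `X = Finset.univ` and takes value `x` at `X`
is consistent with RUM. -/
noncomputable def pdRUM {α : Type*} [Fintype α] [DecidableEq α]
    (d : α) (D : Finset (Finset α)) (p : Finset α → ℝ) : ℝ :=
  sSup {x : ℝ | x ∈ Set.Icc (0 : ℝ) 1 ∧
    ConsistentRUMDefault d D (Function.update p Finset.univ x)}

section Helpers
variable {α : Type*} [Fintype α] [DecidableEq α]

lemma isUniqueMax_unique {u : α → ℝ} {A : Finset α} {x y : α}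
    (hx : IsUniqueMax u A x) (hy : IsUniqueMax u A y) : x = y := by
  by_contra hne
  exact absurd (hx.2 y hy.1 (Ne.symm hne)) (not_lt.2 (le_of_lt (hy.2 x hx.1 hne)))

lemma isUniqueMax_iff_eq {u : α → ℝ} {A : Finset α} {x d : α}
    (hx : IsUniqueMax u A x) (hdA : d ∈ A) : IsUniqueMax u A d ↔ x = d :=
  ⟨fun h => isUniqueMax_unique hx h, fun h => h ▸ hx⟩

lemma exists_utility_of_order (r : α → α → Prop) (hr : IsStrictTotalOrder α r) :
    ∃ u : α → ℝ, Function.Injective u ∧ ∀ a b, r a b → u b < u a := by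
  haveI := hr
  set u : α → ℝ := fun a => ((Finset.univ.filter (fun b => r a b)).card : ℝ) with hu
  have key : ∀ a b, r a b → u b < u a := by
    intro a b hab
    have hsub : Finset.univ.filter (fun c => r b c) ⊆ Finset.univ.filter (fun c => r a c) := by
      intro c hc
      simp only [Finset.mem_filter, Finset.mem_univ, true_and] at hc ⊢
      exact _root_.trans hab hc
    have hss : Finset.univ.filter (fun c => r b c) ⊂ Finset.univ.filter (fun c => r a c) := by
      refine (Finset.ssubset_iff_of_subset hsub).2 ⟨b, ?_, ?_⟩
      · simp only [Finset.mem_filter, Finset.mem_univ, true_and]; exact hab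
      · simp only [Finset.mem_filter, Finset.mem_univ, true_and]
        exact irrefl b
    have := Finset.card_lt_card hss
    simp only [hu]
    exact_mod_cast this
  refine ⟨u, ?_, key⟩
  intro a b hab
  rcases trichotomous_of r a b with h | h | h
  · exact absurd hab.symm (ne_of_lt (key a b h))
  · exact h
  · exact absurd hab (ne_of_lt (key b a h))

/-- From a rationalizable choice function, get a utility that represents it on `D`. -/
lemma rationalizable_exists_utility {D : Finset (Finset α)} {c : Finset α → α}
    (hc : Rationalizable D c) :
    ∃ u : α → ℝ, Function.Injective u ∧ ∀ A ∈ D, IsUniqueMax u A (c A) := by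
  obtain ⟨hmem, r, hr, hgr⟩ := hc
  obtain ⟨u, hu, hrep⟩ := exists_utility_of_order r hr
  exact ⟨u, hu, fun A hA => ⟨hmem A hA, fun y hy hne => hrep _ _ (hgr A hA y hy hne)⟩⟩

noncomputable def argmaxChoice (u : α → ℝ) (d : α) : Finset α → α :=
  fun A => if h : A.Nonempty then (A.exists_max_image u h).choose else d

lemma argmaxChoice_isUniqueMax {u : α → ℝ} (hu : Function.Injective u) (d : α)
    {A : Finset α} (h : A.Nonempty) : IsUniqueMax u A (argmaxChoice u d A) := by
  rw [argmaxChoice, dif_pos h]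
  obtain ⟨hmem, hle⟩ := (A.exists_max_image u h).choose_spec
  exact ⟨hmem, fun y hy hne => lt_of_le_of_ne (hle y hy) (fun he => hne (hu he))⟩

lemma rationalizable_argmaxChoice {u : α → ℝ} (hu : Function.Injective u) (d : α)
    {D : Finset (Finset α)} (hd : ∀ A ∈ D, d ∈ A) :
    Rationalizable D (argmaxChoice u d) := by
  constructor
  · intro A hA
    exact (argmaxChoice_isUniqueMax hu d ⟨d, hd A hA⟩).1
  · refine ⟨fun a b => u b < u a, ?_, ?_⟩
    · exact { trichotomous := fun a b => by
                intro h1 h2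
                exact hu (le_antisymm (not_lt.1 h1) (not_lt.1 h2))
              irrefl := fun a => lt_irrefl _
              trans := fun a b c h1 h2 => h2.trans h1 }
    · intro A hA y hy hne
      exact (argmaxChoice_isUniqueMax hu d ⟨d, hd A hA⟩).2 y hy hne

/-- Fiberwise sum over a filtered index set. -/
lemma sum_fiber_filter {n : ℕ} {V : Type*} [Fintype V] [DecidableEq V]
    (C : Fin n → V) (ρ : Fin n → ℝ) (P : V → Prop) [DecidablePred P] :
    ∑ c ∈ Finset.univ.filter P, ∑ i ∈ Finset.univ.filter (fun i => C i = c), ρ i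
      = ∑ i ∈ Finset.univ.filter (fun i => P (C i)), ρ i := by
  rw [← Finset.sum_fiberwise_of_maps_to (g := C)
      (t := Finset.univ.filter P) (s := Finset.univ.filter (fun i => P (C i)))
      (fun i hi => by
        simp only [Finset.mem_filter, Finset.mem_univ, true_and] at hi ⊢; exact hi) ρ]
  refine Finset.sum_congr rfl fun c hc => Finset.sum_congr ?_ fun _ _ => rfl
  simp only [Finset.mem_filter, Finset.mem_univ, true_and] at hc
  ext i
  simp only [Finset.mem_filter, Finset.mem_univ, true_and]
  exact ⟨fun h => ⟨h ▸ hc, h⟩, fun h => h.2⟩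

end Helpers

section Main
variable {α : Type*} [Fintype α] [DecidableEq α]

theorem pdRUM_isGreatest'
    (d : α) (D : Finset (Finset α)) (hd : ∀ A ∈ D, d ∈ A)
    (hX : Finset.univ ∈ D)
    (p : Finset α → ℝ) (hp : ∀ A ∈ D, p A ∈ Set.Icc (0 : ℝ) 1)
    (hcons : ∃ (n : ℕ) (u : Fin n → α → ℝ) (ρ : Fin n → ℝ),
      (∀ i, Function.Injective (u i)) ∧
      (∀ i, 0 ≤ ρ i) ∧ (∑ i, ρ i = 1) ∧
      ∀ A ∈ D.erase Finset.univ,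
        p A = ∑ i ∈ Finset.univ.filter (fun i => IsUniqueMax (u i) A d), ρ i) :
    IsGreatest
      {y : ℝ | ∃ ν : {c : Finset α → α // Rationalizable D c} → ℝ,
        (∀ c, 0 ≤ ν c) ∧ (∑ c, ν c = 1) ∧
        (∀ A ∈ D.erase Finset.univ,
          (∑ c ∈ Finset.univ.filter
            (fun c : {c : Finset α → α // Rationalizable D c} => c.val A = d), ν c) = p A) ∧
        y = ∑ c ∈ Finset.univ.filter
          (fun c : {c : Finset α → α // Rationalizable D c} => c.val Finset.univ = d), ν c}
      (sSup {x : ℝ | x ∈ Set.Icc (0 : ℝ) 1 ∧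
        ∃ (n : ℕ) (u : Fin n → α → ℝ) (ρ : Fin n → ℝ),
          (∀ i, Function.Injective (u i)) ∧
          (∀ i, 0 ≤ ρ i) ∧ (∑ i, ρ i = 1) ∧
          ∀ A ∈ D, Function.update p Finset.univ x A
            = ∑ i ∈ Finset.univ.filter (fun i => IsUniqueMax (u i) A d), ρ i}) := by
  classical
  set V := {c : Finset α → α // Rationalizable D c} with hV
  set S : Set ℝ := {y : ℝ | ∃ ν : V → ℝ,
        (∀ c, 0 ≤ ν c) ∧ (∑ c, ν c = 1) ∧
        (∀ A ∈ D.erase Finset.univ,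
          (∑ c ∈ Finset.univ.filter (fun c : V => c.val A = d), ν c) = p A) ∧
        y = ∑ c ∈ Finset.univ.filter (fun c : V => c.val Finset.univ = d), ν c} with hSdef
  set T : Set ℝ := {x : ℝ | x ∈ Set.Icc (0 : ℝ) 1 ∧
        ∃ (n : ℕ) (u : Fin n → α → ℝ) (ρ : Fin n → ℝ),
          (∀ i, Function.Injective (u i)) ∧
          (∀ i, 0 ≤ ρ i) ∧ (∑ i, ρ i = 1) ∧
          ∀ A ∈ D, Function.update p Finset.univ x A
            = ∑ i ∈ Finset.univ.filter (fun i => IsUniqueMax (u i) A d), ρ i} with hTdef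
  -- Direction (b): T ⊆ S
  have hTS : T ⊆ S := by
    rintro x ⟨hx01, n, u, ρ, hinj, hρ0, hρ1, heq⟩
    set C : Fin n → V := fun i =>
      ⟨argmaxChoice (u i) d, rationalizable_argmaxChoice (hinj i) d hd⟩ with hC
    set ν : V → ℝ := fun c => ∑ i ∈ Finset.univ.filter (fun i => C i = c), ρ i with hν
    have hν0 : ∀ c, 0 ≤ ν c := fun c => Finset.sum_nonneg fun i _ => hρ0 i
    have hν1 : ∑ c, ν c = 1 := by
      rw [← hρ1]; exact Finset.sum_fiberwise Finset.univ C ρ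
    have hkey : ∀ A ∈ D, (∑ c ∈ Finset.univ.filter (fun c : V => c.val A = d), ν c)
        = Function.update p Finset.univ x A := by
      intro A hA
      rw [sum_fiber_filter C ρ (fun c => c.val A = d), heq A hA]
      congr 1
      apply Finset.filter_congr
      intro i _
      have hmax : IsUniqueMax (u i) A ((C i).val A) :=
        argmaxChoice_isUniqueMax (hinj i) d ⟨d, hd A hA⟩
      exact (isUniqueMax_iff_eq hmax (hd A hA)).symm
    refine ⟨ν, hν0, hν1, fun A hA => ?_, ?_⟩
    · obtain ⟨hAne, hAD⟩ := Finset.mem_erase.1 hA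
      rw [hkey A hAD, Function.update_of_ne hAne]
    · rw [hkey Finset.univ hX, Function.update_self]
  -- Direction (a): S ⊆ T
  have hST : S ⊆ T := by
    rintro y ⟨ν, hν0, hν1, hνA, hy⟩
    have hy1 : y ≤ 1 := by
      rw [hy, ← hν1]
      exact Finset.sum_le_sum_of_subset_of_nonneg (Finset.filter_subset _ _)
        (fun i _ _ => hν0 i)
    have hy0 : 0 ≤ y := hy ▸ Finset.sum_nonneg fun i _ => hν0 i
    refine ⟨⟨hy0, hy1⟩, ?_⟩
    choose U hUinj hUmax using fun c : V => rationalizable_exists_utility c.prop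
    set e : Fin (Fintype.card V) ≃ V := (Fintype.equivFin V).symm with he
    refine ⟨Fintype.card V, fun i => U (e i), fun i => ν (e i),
      fun i => hUinj (e i), fun i => hν0 _, (Equiv.sum_comp e ν).trans hν1, ?_⟩
    intro A hA
    have hsum : ∑ i ∈ Finset.univ.filter (fun i => IsUniqueMax (U (e i)) A d), ν (e i)
        = ∑ c ∈ Finset.univ.filter (fun c : V => c.val A = d), ν c := by
      refine Finset.sum_equiv e (fun i => ?_) (fun i _ => rfl)
      simp only [Finset.mem_filter, Finset.mem_univ, true_and]
      exact isUniqueMax_iff_eq (hUmax (e i) A hA) (hd A hA)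
    by_cases hAu : A = Finset.univ
    · subst hAu
      rw [Function.update_self, hy, ← hsum]
    · rw [Function.update_of_ne hAu, ← hνA A (Finset.mem_erase.2 ⟨hAu, hA⟩), ← hsum]
  have hTSeq : T = S := Set.Subset.antisymm hTS hST
  -- Nonemptiness of T
  have hTne : T.Nonempty := by
    obtain ⟨n, u, ρ, hinj, hρ0, hρ1, heq⟩ := hcons
    set x₀ : ℝ := ∑ i ∈ Finset.univ.filter
      (fun i => IsUniqueMax (u i) Finset.univ d), ρ i with hx₀
    refine ⟨x₀, ⟨Finset.sum_nonneg fun i _ => hρ0 i, ?_⟩, n, u, ρ, hinj, hρ0, hρ1, ?_⟩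
    · rw [← hρ1]
      exact Finset.sum_le_sum_of_subset_of_nonneg (Finset.filter_subset _ _)
        (fun i _ _ => hρ0 i)
    · intro A hA
      by_cases hAu : A = Finset.univ
      · subst hAu; rw [Function.update_self]
      · rw [Function.update_of_ne hAu]
        exact heq A (Finset.mem_erase.2 ⟨hAu, hA⟩)
  -- Compactness
  set Δ : Set (V → ℝ) := {ν | (∀ c, 0 ≤ ν c) ∧ (∑ c, ν c = 1) ∧
      ∀ A ∈ D.erase Finset.univ,
        (∑ c ∈ Finset.univ.filter (fun c : V => c.val A = d), ν c) = p A} with hΔdef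
  set f : (V → ℝ) → ℝ := fun ν =>
    ∑ c ∈ Finset.univ.filter (fun c : V => c.val Finset.univ = d), ν c with hf
  have hSeq : S = f '' Δ := by
    ext y
    constructor
    · rintro ⟨ν, h0, h1, h2, h3⟩; exact ⟨ν, ⟨h0, h1, h2⟩, h3.symm⟩
    · rintro ⟨ν, ⟨h0, h1, h2⟩, h3⟩; exact ⟨ν, h0, h1, h2, h3.symm⟩
  have hclosed : IsClosed Δ := by
    have h1 : IsClosed {ν : V → ℝ | ∀ c, 0 ≤ ν c} := by
      have he : {ν : V → ℝ | ∀ c, 0 ≤ ν c} = ⋂ c, {ν | 0 ≤ ν c} := by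
        ext ν; simp [Set.mem_iInter]
      rw [he]
      exact isClosed_iInter fun c => isClosed_le continuous_const (continuous_apply c)
    have h2 : IsClosed {ν : V → ℝ | ∑ c, ν c = 1} :=
      isClosed_eq (continuous_finset_sum _ fun c _ => continuous_apply c) continuous_const
    have h3 : IsClosed {ν : V → ℝ | ∀ A ∈ D.erase Finset.univ,
        (∑ c ∈ Finset.univ.filter (fun c : V => c.val A = d), ν c) = p A} := by
      have he : {ν : V → ℝ | ∀ A ∈ D.erase Finset.univ,
          (∑ c ∈ Finset.univ.filter (fun c : V => c.val A = d), ν c) = p A}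
          = ⋂ A ∈ (D.erase Finset.univ : Finset (Finset α)),
            {ν : V → ℝ | (∑ c ∈ Finset.univ.filter (fun c : V => c.val A = d), ν c) = p A} := by
        ext ν; simp [Set.mem_iInter]
      rw [he]
      exact isClosed_biInter fun A _ =>
        isClosed_eq (continuous_finset_sum _ fun c _ => continuous_apply c) continuous_const
    exact h1.inter (h2.inter h3)
  have hsub : Δ ⊆ Set.pi Set.univ (fun _ : V => Set.Icc (0 : ℝ) 1) := by
    rintro ν ⟨h0, h1, _⟩ c _
    refine ⟨h0 c, ?_⟩
    rw [← h1]
    exact Finset.single_le_sum (fun i _ => h0 i) (Finset.mem_univ c)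
  have hΔc : IsCompact Δ :=
    (isCompact_univ_pi fun _ => isCompact_Icc).of_isClosed_subset hclosed hsub
  have hfcont : Continuous f := continuous_finset_sum _ fun c _ => continuous_apply c
  have himg : IsCompact (f '' Δ) := hΔc.image hfcont
  have hne : (f '' Δ).Nonempty := by
    rw [← hSeq]; exact ⟨_, hTS hTne.choose_spec⟩
  have hg : IsGreatest (f '' Δ) (sSup (f '' Δ)) :=
    ⟨himg.sSup_mem hne, fun y hy => le_csSup himg.bddAbove hy⟩
  rw [hTSeq, hSeq]
  exact hg

end Main


/-- if the restriction of `p_d` to `D \ {X}` is consistent with RUM, then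
`p_d^RUM(X)` equals the maximum, over all probability distributions `ν` on the set of
rationalizable deterministic choice functions on `D` that reproduce `p_d` on `D \ {X}`,
of the `ν`-probability of `{c : c X = d}`; in particular the maximum is attained. -/
theorem pdRUM_isGreatest {α : Type*} [Fintype α] [DecidableEq α]
    (d : α) (D : Finset (Finset α)) (hd : ∀ A ∈ D, d ∈ A)
    (hX : Finset.univ ∈ D)
    (p : Finset α → ℝ) (hp : ∀ A ∈ D, p A ∈ Set.Icc (0 : ℝ) 1)
    (hcons : ConsistentRUMDefault d (D.erase Finset.univ) p) :
    IsGreatest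
      {y : ℝ | ∃ ν : {c : Finset α → α // Rationalizable D c} → ℝ,
        (∀ c, 0 ≤ ν c) ∧ (∑ c, ν c = 1) ∧
        (∀ A ∈ D.erase Finset.univ,
          (∑ c ∈ Finset.univ.filter
            (fun c : {c : Finset α → α // Rationalizable D c} => c.val A = d), ν c) = p A) ∧
        y = ∑ c ∈ Finset.univ.filter
          (fun c : {c : Finset α → α // Rationalizable D c} => c.val Finset.univ = d), ν c}
      (pdRUM d D p) := by
  exact pdRUM_isGreatest' d D hd hX p hp hcons
end

section
/- Let X be a finite set with default d ∈ X, let D be a collection of subsets of X each containing d with X ∈ D and D \ {X} nonempty, and let p_d : D → [0,1] be a default-choice data set whose restriction to D \ {X} is consistent with the random utility model. Then p_d^RUM(X) ≤ min over A ∈ D \ {X} of p_d(A); that is, the RUM bound is at most the Min bound. -/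
open scoped Classical

/-- the RUM bound is at most the Min bound, i.e. `p_d^RUM(X)` is at most the
minimum of `p_d A` over `A ∈ D \ {X}`. -/
theorem pdRUM_le_min {α : Type*} [Fintype α] [DecidableEq α]
    (d : α) (D : Finset (Finset α)) (hd : ∀ A ∈ D, d ∈ A)
    (hX : Finset.univ ∈ D) (hne : (D.erase Finset.univ).Nonempty)
    (p : Finset α → ℝ) (hp : ∀ A ∈ D, p A ∈ Set.Icc (0 : ℝ) 1)
    (hcons : ConsistentRUMDefault d (D.erase Finset.univ) p) :
    pdRUM d D p ≤ (D.erase Finset.univ).inf' hne p := by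
  apply Finset.le_inf'
  intro A hA
  have hAD : A ∈ D := Finset.mem_of_mem_erase hA
  have hAne : A ≠ Finset.univ := Finset.ne_of_mem_erase hA
  apply Real.sSup_le
  · rintro x ⟨hx01, n, u, ρ, hinj, hρ0, hρ1, hsum⟩
    have hU := hsum Finset.univ hX
    have hAeq := hsum A hAD
    rw [Function.update_self] at hU
    rw [Function.update_of_ne hAne] at hAeq
    rw [hU, hAeq]
    apply Finset.sum_le_sum_of_subset_of_nonneg
    · intro i hi
      simp only [Finset.mem_filter, Finset.mem_univ, true_and] at hi ⊢
      exact ⟨hd A hAD, fun y hy hyd => hi.2 y (Finset.mem_univ y) hyd⟩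
    · intro i _ _
      exact hρ0 i
  · exact (hp A hAD).1
end

section
/- Let X be a finite set with default d ∈ X, and let A be a subset of X with d ∈ A, A ≠ {d} (A contains at least one non-default element), and A a proper subset of X. Let D = {A, X} and let α, β ∈ [0,1]. The default-choice data set p_d with p_d(A) = α and p_d(X) = β is consistent with the random utility model if and only if β ≤ α. -/
open scoped Classical

/-- with `D = {A, X}` where `d ∈ A`, `A` contains a non-default element and
`A` is a proper subset of the grand set `X = Finset.univ`, the default-choice data set with
`p_d(A) = pA` and `p_d(X) = pX` (both in `[0,1]`) is consistent with RUM iff `pX ≤ pA`. -/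
theorem two_set_rum_iff {α : Type*} [Fintype α] [DecidableEq α]
    (d : α) (A : Finset α) (hdA : d ∈ A) (hA : ∃ x ∈ A, x ≠ d)
    (hAX : A ⊂ Finset.univ)
    (pA pX : ℝ) (hpA : pA ∈ Set.Icc (0 : ℝ) 1) (hpX : pX ∈ Set.Icc (0 : ℝ) 1)
    (p : Finset α → ℝ) (hp1 : p A = pA) (hp2 : p Finset.univ = pX) :
    ConsistentRUMDefault d {A, Finset.univ} p ↔ pX ≤ pA := by
  constructor
  · rintro ⟨n, u, ρ, hinj, hnn, hsum, hval⟩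
    have hA' := hval A (by simp)
    have hX' := hval Finset.univ (by simp)
    rw [hp1] at hA'; rw [hp2] at hX'
    rw [hA', hX']
    apply Finset.sum_le_sum_of_subset_of_nonneg
    · intro i hi
      simp only [Finset.mem_filter, Finset.mem_univ, true_and] at hi ⊢
      exact ⟨hdA, fun y hy hyd => hi.2 y (Finset.mem_univ y) hyd⟩
    · intro i _ _; exact hnn i
  · intro hle
    obtain ⟨b, hbA, hbd⟩ := hA
    obtain ⟨c, -, hcA⟩ := Finset.exists_of_ssubset hAX
    have hcd : c ≠ d := fun h => hcA (h ▸ hdA)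
    set N : ℝ := (Fintype.card α : ℝ)
    set f : α → ℝ := fun x => ((Fintype.equivFin α x : ℕ) : ℝ) with hf
    have hfinj : Function.Injective f := fun x y h => by
      apply (Fintype.equivFin α).injective
      exact Fin.ext (Nat.cast_injective h)
    have hflt : ∀ x, f x < N := fun x => by
      simp only [hf, N]
      exact_mod_cast (Fintype.equivFin α x).isLt
    -- three utilities
    set u1 : α → ℝ := fun x => if x = d then N else f x with hu1
    set u2 : α → ℝ := fun x => if x = c then N + 1 else if x = d then N else f x with hu2
    set u3 : α → ℝ := fun x => if x = b then N + 1 else if x = d then N else f x with hu3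
    have key : ∀ (t : α) (ht : t ≠ d) (x y : α),
        (if x = t then N + 1 else if x = d then N else f x) =
        (if y = t then N + 1 else if y = d then N else f y) → x = y := by
      intro t ht x y h
      by_cases hx : x = t <;> by_cases hy : y = t <;>
        simp [hx, hy] at h ⊢ <;>
        first
        | rfl
        | (by_cases hx2 : x = d <;> by_cases hy2 : y = d <;> simp [hx2, hy2] at h ⊢ <;>
            first
            | rfl
            | exact absurd h (by push_neg; first | exact (hflt _).ne | exact (hflt _).ne' | nlinarith [hflt x, hflt y])
            | exact hfinj h)
    refine ⟨3, ![u1, u2, u3], ![pX, pA - pX, 1 - pA], ?_, ?_, ?_, ?_⟩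
    · intro i
      fin_cases i
      · intro x y h
        simp only [hu1] at h
        by_cases hx : x = d <;> by_cases hy : y = d <;> simp [hx, hy] at h ⊢
        · exact absurd h (hflt y).ne'
        · exact absurd h (hflt x).ne
        · exact hfinj h
      · exact key c hcd
      · exact key b hbd
    · intro i
      fin_cases i
      · exact hpX.1
      · show (0:ℝ) ≤ pA - pX; linarith
      · show (0:ℝ) ≤ 1 - pA; linarith [hpA.2]
    · simp [Fin.sum_univ_three]
    · -- the value condition
      have hm1A : IsUniqueMax u1 A d := by
        refine ⟨hdA, fun y hy hyd => ?_⟩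
        simp [hu1, hyd]
        exact hflt y
      have hm1X : IsUniqueMax u1 Finset.univ d := by
        refine ⟨Finset.mem_univ d, fun y _ hyd => ?_⟩
        simp [hu1, hyd]
        exact hflt y
      have hm2A : IsUniqueMax u2 A d := by
        refine ⟨hdA, fun y hy hyd => ?_⟩
        have hyc : y ≠ c := fun h => hcA (h ▸ hy)
        simp [hu2, hyd, hyc, hcd, Ne.symm hcd]
        exact hflt y
      have hm2X : ¬ IsUniqueMax u2 Finset.univ d := by
        rintro ⟨-, h⟩
        have := h c (Finset.mem_univ c) hcd
        simp [hu2, hcd, Ne.symm hcd] at this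
        linarith
      have hm3A : ¬ IsUniqueMax u3 A d := by
        rintro ⟨-, h⟩
        have := h b hbA hbd
        simp [hu3, hbd, Ne.symm hbd] at this
        linarith
      have hm3X : ¬ IsUniqueMax u3 Finset.univ d := by
        rintro ⟨-, h⟩
        have := h b (Finset.mem_univ b) hbd
        simp [hu3, hbd, Ne.symm hbd] at this
        linarith
      intro B hB
      rw [Finset.sum_filter, Fin.sum_univ_three]
      simp only [Matrix.cons_val_zero, Matrix.cons_val_one, Matrix.head_cons,
        Matrix.cons_val_two, Matrix.tail_cons]
      rcases Finset.mem_insert.mp hB with h | h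
      · subst h
        rw [hp1]; simp only [hm1A, hm2A, hm3A, ↓reduceIte]; ring
      · simp only [Finset.mem_singleton] at h
        subst h
        rw [hp2]; simp only [hm1X, hm2X, hm3X, ↓reduceIte]; ring
end

section
/- Let p be a real number with 0 < p < 1 such that 1 − (1 − p)^6 = 3/25. Then 1/50 < p < 9/400, and 1 − (1 − p)^24 = 1 − (22/25)^4 > 2/5. -/
/-- if `0 < p < 1` and `1 - (1-p)^6 = 3/25` (the jam-study active-choice
probability from six items), then `1/50 < p < 9/400`, and the active-choice probability
from twenty-four items satisfies `1 - (1-p)^24 = 1 - (22/25)^4 > 2/5`. -/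
theorem jam_example (p : ℝ) (h0 : 0 < p) (h1 : p < 1)
    (h : 1 - (1 - p) ^ 6 = 3 / 25) :
    (1 / 50 < p ∧ p < 9 / 400) ∧
      1 - (1 - p) ^ 24 = 1 - (22 / 25 : ℝ) ^ 4 ∧
      (2 / 5 : ℝ) < 1 - (22 / 25 : ℝ) ^ 4 := by
  have hq : (1 - p) ^ 6 = 22 / 25 := by linarith
  have hpos : (0:ℝ) < 1 - p := by linarith
  refine ⟨⟨?_, ?_⟩, ?_, by norm_num⟩
  · by_contra hle
    push_neg at hle
    have h49 : (49/50:ℝ) ≤ 1 - p := by linarith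
    have := pow_le_pow_left₀ (by norm_num : (0:ℝ) ≤ 49/50) h49 6
    norm_num at this
    linarith
  · by_contra hle
    push_neg at hle
    have h391 : 1 - p ≤ (391/400:ℝ) := by linarith
    have := pow_le_pow_left₀ (le_of_lt hpos) h391 6
    norm_num at this
    linarith
  · have : (1 - p) ^ 24 = ((1 - p) ^ 6) ^ 4 := by ring
    rw [this, hq]
end

section
/- Let {a, b, c, d} be a four-element set. There exists a probability distribution μ on the set of strict linear orders on {a, b, c, d} such that for every x ∈ {a, b, c}, the μ-probability of the event {≻ : x ≻ d} equals 1/5, and for every pair of distinct x, y ∈ {a, b, c}, the μ-probability of the event {≻ : x ≻ d or y ≻ d} equals 2/5. -/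
open scoped Classical

lemma order_of_inj' {α : Type*} (f : α → ℕ) (hf : Function.Injective f) :
    IsStrictTotalOrder α (fun x y => f y < f x) :=
  { trichotomous := fun x y => by
      rcases lt_trichotomy (f x) (f y) with h | h | h
      · exact fun _ h2 => absurd h h2
      · exact fun _ _ => hf h
      · exact fun h1 _ => absurd h h1
    irrefl := fun x => lt_irrefl _
    trans := fun x y z h1 h2 => lt_trans h2 h1 }

lemma rank_inj' {α : Type*} [Fintype α] [DecidableEq α] (a b c d : α) (na nb nc nd : ℕ)
    (hab : a ≠ b) (hac : a ≠ c) (had : a ≠ d)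
    (hbc : b ≠ c) (hbd : b ≠ d) (hcd : c ≠ d)
    (huniv : (Finset.univ : Finset α) = {a, b, c, d})
    (h1 : na ≠ nb) (h2 : na ≠ nc) (h3 : na ≠ nd)
    (h4 : nb ≠ nc) (h5 : nb ≠ nd) (h6 : nc ≠ nd) :
    Function.Injective
      (fun x => if x = a then na else if x = b then nb else if x = c then nc else nd) := by
  intro x y hxy
  have hx : x ∈ ({a, b, c, d} : Finset α) := huniv ▸ Finset.mem_univ x
  have hy : y ∈ ({a, b, c, d} : Finset α) := huniv ▸ Finset.mem_univ y
  simp only [Finset.mem_insert, Finset.mem_singleton] at hx hy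
  rcases hx with rfl | rfl | rfl | rfl <;> rcases hy with rfl | rfl | rfl | rfl <;>
    simp only [if_pos rfl, if_neg hab, if_neg hac, if_neg had, if_neg hbc, if_neg hbd,
      if_neg hcd, if_neg (Ne.symm hab), if_neg (Ne.symm hac), if_neg (Ne.symm had),
      if_neg (Ne.symm hbc), if_neg (Ne.symm hbd), if_neg (Ne.symm hcd)] at hxy <;>
    first
    | rfl
    | exact absurd hxy (by assumption)
    | exact absurd hxy.symm (by assumption)

/-- on a four-element set `{a, b, c, d}` there exists a probability
distribution `μ` on the set of strict linear orders (here `r x y` means `x ≻ y`) such that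
for each `x ∈ {a,b,c}` the event `{≻ : x ≻ d}` has `μ`-probability `1/5`, and for each pair
of distinct `x, y ∈ {a,b,c}` the event `{≻ : x ≻ d or y ≻ d}` has `μ`-probability `2/5`. -/
theorem example_distribution_exists {α : Type*} [Fintype α] [DecidableEq α]
    (a b c d : α)
    (hab : a ≠ b) (hac : a ≠ c) (had : a ≠ d)
    (hbc : b ≠ c) (hbd : b ≠ d) (hcd : c ≠ d)
    (huniv : (Finset.univ : Finset α) = {a, b, c, d}) :
    ∃ μ : {r : α → α → Prop // IsStrictTotalOrder α r} → ℝ,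
      (∀ r, 0 ≤ μ r) ∧ (∑ r, μ r = 1) ∧
      (∀ x ∈ ({a, b, c} : Finset α),
        (∑ r ∈ Finset.univ.filter
          (fun r : {r : α → α → Prop // IsStrictTotalOrder α r} => r.val x d), μ r) = 1 / 5) ∧
      (∀ x ∈ ({a, b, c} : Finset α), ∀ y ∈ ({a, b, c} : Finset α), x ≠ y →
        (∑ r ∈ Finset.univ.filter
          (fun r : {r : α → α → Prop // IsStrictTotalOrder α r} =>
            r.val x d ∨ r.val y d), μ r) = 2 / 5) := by
  set f0 : α → ℕ := fun x => if x = a then 2 else if x = b then 1 else if x = c then 0 else 3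
    with hf0
  set fa : α → ℕ := fun x => if x = a then 3 else if x = b then 1 else if x = c then 0 else 2
    with hfa
  set fb : α → ℕ := fun x => if x = a then 1 else if x = b then 3 else if x = c then 0 else 2
    with hfb
  set fc : α → ℕ := fun x => if x = a then 1 else if x = b then 0 else if x = c then 3 else 2
    with hfc
  have t0 : IsStrictTotalOrder α (fun x y => f0 y < f0 x) :=
    order_of_inj' _ (rank_inj' a b c d 2 1 0 3 hab hac had hbc hbd hcd huniv
      (by norm_num) (by norm_num) (by norm_num) (by norm_num) (by norm_num) (by norm_num))
  have ta : IsStrictTotalOrder α (fun x y => fa y < fa x) :=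
    order_of_inj' _ (rank_inj' a b c d 3 1 0 2 hab hac had hbc hbd hcd huniv
      (by norm_num) (by norm_num) (by norm_num) (by norm_num) (by norm_num) (by norm_num))
  have tb : IsStrictTotalOrder α (fun x y => fb y < fb x) :=
    order_of_inj' _ (rank_inj' a b c d 1 3 0 2 hab hac had hbc hbd hcd huniv
      (by norm_num) (by norm_num) (by norm_num) (by norm_num) (by norm_num) (by norm_num))
  have tc : IsStrictTotalOrder α (fun x y => fc y < fc x) :=
    order_of_inj' _ (rank_inj' a b c d 1 0 3 2 hab hac had hbc hbd hcd huniv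
      (by norm_num) (by norm_num) (by norm_num) (by norm_num) (by norm_num) (by norm_num))
  -- value lemmas
  have e0a : f0 a = 2 := by simp [hf0]
  have e0b : f0 b = 1 := by simp [hf0, Ne.symm hab]
  have e0c : f0 c = 0 := by simp [hf0, Ne.symm hac, Ne.symm hbc]
  have e0d : f0 d = 3 := by simp [hf0, Ne.symm had, Ne.symm hbd, Ne.symm hcd]
  have eaa : fa a = 3 := by simp [hfa]
  have eab : fa b = 1 := by simp [hfa, Ne.symm hab]
  have eac : fa c = 0 := by simp [hfa, Ne.symm hac, Ne.symm hbc]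
  have ead : fa d = 2 := by simp [hfa, Ne.symm had, Ne.symm hbd, Ne.symm hcd]
  have eba : fb a = 1 := by simp [hfb]
  have ebb : fb b = 3 := by simp [hfb, Ne.symm hab]
  have ebc : fb c = 0 := by simp [hfb, Ne.symm hac, Ne.symm hbc]
  have ebd : fb d = 2 := by simp [hfb, Ne.symm had, Ne.symm hbd, Ne.symm hcd]
  have eca : fc a = 1 := by simp [hfc]
  have ecb : fc b = 0 := by simp [hfc, Ne.symm hab]
  have ecc : fc c = 3 := by simp [hfc, Ne.symm hac, Ne.symm hbc]
  have ecd : fc d = 2 := by simp [hfc, Ne.symm had, Ne.symm hbd, Ne.symm hcd]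
  set o0 : {r : α → α → Prop // IsStrictTotalOrder α r} := ⟨_, t0⟩ with ho0
  set oa : {r : α → α → Prop // IsStrictTotalOrder α r} := ⟨_, ta⟩ with hoa
  set ob : {r : α → α → Prop // IsStrictTotalOrder α r} := ⟨_, tb⟩ with hob
  set oc : {r : α → α → Prop // IsStrictTotalOrder α r} := ⟨_, tc⟩ with hoc
  refine ⟨fun r => (if r = o0 then (2:ℝ)/5 else 0) + (if r = oa then (1:ℝ)/5 else 0)
      + (if r = ob then (1:ℝ)/5 else 0) + (if r = oc then (1:ℝ)/5 else 0), ?_, ?_, ?_, ?_⟩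
  · intro r
    positivity
  · simp only [Finset.sum_add_distrib, Finset.sum_ite_eq', Finset.mem_univ, if_true]
    norm_num
  · intro x hx
    simp only [Finset.mem_insert, Finset.mem_singleton] at hx
    rcases hx with rfl | rfl | rfl <;>
    · rw [Finset.sum_add_distrib, Finset.sum_add_distrib, Finset.sum_add_distrib,
        Finset.sum_ite_eq', Finset.sum_ite_eq', Finset.sum_ite_eq', Finset.sum_ite_eq']
      simp only [Finset.mem_filter, Finset.mem_univ, true_and, ho0, hoa, hob, hoc,
        e0a, e0b, e0c, e0d, eaa, eab, eac, ead, eba, ebb, ebc, ebd, eca, ecb, ecc, ecd]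
      norm_num
  · intro x hx y hy hxy
    simp only [Finset.mem_insert, Finset.mem_singleton] at hx hy
    rcases hx with rfl | rfl | rfl <;> rcases hy with rfl | rfl | rfl <;>
      first
      | exact absurd rfl hxy
      | · rw [Finset.sum_add_distrib, Finset.sum_add_distrib, Finset.sum_add_distrib,
            Finset.sum_ite_eq', Finset.sum_ite_eq', Finset.sum_ite_eq', Finset.sum_ite_eq']
          simp only [Finset.mem_filter, Finset.mem_univ, true_and, ho0, hoa, hob, hoc,
            e0a, e0b, e0c, e0d, eaa, eab, eac, ead, eba, ebb, ebc, ebd, eca, ecb, ecc, ecd]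
          norm_num
end

section
/- Let X = {a, b, c, d} with default d, and let D consist of all subsets of X containing d with at least two elements, together with X itself. Define the default-choice data set p_d by p_d({x, d}) = 4/5 for x ∈ {a, b, c}, p_d({x, y, d}) = 3/5 for distinct x, y ∈ {a, b, c}, and p_d(X) = 1/2. Then p_d satisfies monotonicity (p_d(A) ≥ p_d(B) whenever A, B ∈ D and A ⊆ B), but p_d is not consistent with the random utility model. -/
open scoped Classical

set_option maxHeartbeats 1000000

/-- on `X = {a, b, c, d}` with default `d`, let `D` be all subsets of `X`
containing `d` with at least two elements (this includes `X` itself). The default-choice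
data set with `p_d({x,d}) = 4/5`, `p_d({x,y,d}) = 3/5` and `p_d(X) = 1/2` satisfies
monotonicity but is not consistent with the random utility model. -/
theorem monotone_not_rum {α : Type*} [Fintype α] [DecidableEq α]
    (a b c d : α)
    (hab : a ≠ b) (hac : a ≠ c) (had : a ≠ d)
    (hbc : b ≠ c) (hbd : b ≠ d) (hcd : c ≠ d)
    (huniv : (Finset.univ : Finset α) = {a, b, c, d})
    (D : Finset (Finset α))
    (hD : D = Finset.univ.filter (fun A : Finset α => d ∈ A ∧ 2 ≤ A.card))
    (p : Finset α → ℝ)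
    (h2 : ∀ x ∈ ({a, b, c} : Finset α), p {x, d} = 4 / 5)
    (h3 : ∀ x ∈ ({a, b, c} : Finset α), ∀ y ∈ ({a, b, c} : Finset α), x ≠ y →
      p {x, y, d} = 3 / 5)
    (hX : p Finset.univ = 1 / 2) :
    (∀ A ∈ D, ∀ B ∈ D, A ⊆ B → p B ≤ p A) ∧ ¬ ConsistentRUMDefault d D p := by
  subst hD
  -- cardinality helpers
  have card2 : ∀ x : α, x ≠ d → ({x, d} : Finset α).card = 2 := by
    intro x hxd
    rw [Finset.card_insert_of_notMem (by simp [hxd]), Finset.card_singleton]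
  have card3 : ∀ x y : α, x ≠ y → x ≠ d → y ≠ d → ({x, y, d} : Finset α).card = 3 := by
    intro x y hxy hxd hyd
    rw [Finset.card_insert_of_notMem (by simp [hxy, hxd]), card2 y hyd]
  have card4 : (Finset.univ : Finset α).card = 4 := by
    rw [huniv, Finset.card_insert_of_notMem (by simp [hab, hac, had]),
      Finset.card_insert_of_notMem (by simp [hbc, hbd]), card2 c hcd]
  -- membership in D
  have memD : ∀ A : Finset α, d ∈ A → 2 ≤ A.card →
      A ∈ Finset.univ.filter (fun A : Finset α => d ∈ A ∧ 2 ≤ A.card) := by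
    intro A h1 h2'
    simp [h1, h2']
  -- value of p on sets in D
  have hval : ∀ A : Finset α, d ∈ A → 2 ≤ A.card →
      (A.card = 2 ∧ p A = 4/5) ∨ (A.card = 3 ∧ p A = 3/5) ∨ (A.card = 4 ∧ p A = 1/2) := by
    intro A hdA hcA
    have hsub : ∀ x, x ∈ A → x ∈ ({a, b, c, d} : Finset α) := by
      intro x _
      rw [← huniv]; exact Finset.mem_univ x
    have hchar : ∀ x, x ∈ A ↔ (x = a ∧ a ∈ A) ∨ (x = b ∧ b ∈ A) ∨ (x = c ∧ c ∈ A) ∨ x = d := by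
      intro x
      constructor
      · intro hxA
        have hx := hsub x hxA
        simp only [Finset.mem_insert, Finset.mem_singleton] at hx
        rcases hx with rfl | rfl | rfl | rfl <;> tauto
      · rintro (⟨rfl, h⟩ | ⟨rfl, h⟩ | ⟨rfl, h⟩ | rfl)
        · exact h
        · exact h
        · exact h
        · exact hdA
    by_cases ha : a ∈ A <;> by_cases hb : b ∈ A <;> by_cases hc : c ∈ A
    · have hA : A = Finset.univ := by
        apply Finset.eq_univ_of_forall
        intro x
        have hx := huniv ▸ Finset.mem_univ x
        simp only [Finset.mem_insert, Finset.mem_singleton] at hx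
        rcases hx with rfl | rfl | rfl | rfl <;> assumption
      subst hA
      exact Or.inr (Or.inr ⟨card4, hX⟩)
    · have hA : A = {a, b, d} := by
        ext x
        rw [hchar x]
        simp [Finset.mem_insert, ha, hb, hc]
      subst hA
      exact Or.inr (Or.inl ⟨card3 a b hab had hbd, h3 a (by simp) b (by simp) hab⟩)
    · have hA : A = {a, c, d} := by
        ext x
        rw [hchar x]
        simp [Finset.mem_insert, ha, hb, hc]
      subst hA
      exact Or.inr (Or.inl ⟨card3 a c hac had hcd, h3 a (by simp) c (by simp) hac⟩)
    · have hA : A = {a, d} := by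
        ext x
        rw [hchar x]
        simp [Finset.mem_insert, ha, hb, hc]
      subst hA
      exact Or.inl ⟨card2 a had, h2 a (by simp)⟩
    · have hA : A = {b, c, d} := by
        ext x
        rw [hchar x]
        simp [Finset.mem_insert, ha, hb, hc]
      subst hA
      exact Or.inr (Or.inl ⟨card3 b c hbc hbd hcd, h3 b (by simp) c (by simp) hbc⟩)
    · have hA : A = {b, d} := by
        ext x
        rw [hchar x]
        simp [Finset.mem_insert, ha, hb, hc]
      subst hA
      exact Or.inl ⟨card2 b hbd, h2 b (by simp)⟩
    · have hA : A = {c, d} := by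
        ext x
        rw [hchar x]
        simp [Finset.mem_insert, ha, hb, hc]
      subst hA
      exact Or.inl ⟨card2 c hcd, h2 c (by simp)⟩
    · exfalso
      have hA : A = {d} := by
        ext x
        rw [hchar x]
        simp [ha, hb, hc]
      rw [hA, Finset.card_singleton] at hcA
      omega
  constructor
  · -- monotonicity
    intro A hA B hB hsub
    simp only [Finset.mem_filter, Finset.mem_univ, true_and] at hA hB
    have hc := Finset.card_le_card hsub
    rcases hval A hA.1 hA.2 with ⟨h1, h2'⟩ | ⟨h1, h2'⟩ | ⟨h1, h2'⟩ <;>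
      rcases hval B hB.1 hB.2 with ⟨g1, g2⟩ | ⟨g1, g2⟩ | ⟨g1, g2⟩ <;>
      first
        | (exfalso; omega)
        | (rw [h2', g2]; try norm_num)
  · -- not RUM
    rintro ⟨n, u, ρ, hinj, hρ0, hρ1, hp⟩
    -- characterize unique-max conditions
    have hIU : ∀ (i : Fin n) (A : Finset α), d ∈ A →
        (IsUniqueMax (u i) A d ↔ ∀ y ∈ A, y ≠ d → u i y < u i d) :=
      fun i A hd => ⟨fun h => h.2, fun h => ⟨hd, h⟩⟩
    have e2 : ∀ x : α, x ≠ d → p {x, d} =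
        ∑ i, if u i x < u i d then ρ i else 0 := by
      intro x hxd
      rw [hp {x, d} (memD _ (by simp) (by rw [card2 x hxd])), Finset.sum_filter]
      apply Finset.sum_congr rfl
      intro i _
      have : IsUniqueMax (u i) {x, d} d ↔ u i x < u i d := by
        rw [hIU i _ (by simp)]
        constructor
        · intro h; exact h x (by simp) hxd
        · intro h y hy hyd
          simp only [Finset.mem_insert, Finset.mem_singleton] at hy
          rcases hy with rfl | rfl
          · exact h
          · exact absurd rfl hyd
      simp [this]
    have e3 : ∀ x y : α, x ≠ y → x ≠ d → y ≠ d → p {x, y, d} =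
        ∑ i, if u i x < u i d ∧ u i y < u i d then ρ i else 0 := by
      intro x y hxy hxd hyd
      rw [hp {x, y, d} (memD _ (by simp) (by rw [card3 x y hxy hxd hyd]; omega)), Finset.sum_filter]
      apply Finset.sum_congr rfl
      intro i _
      have : IsUniqueMax (u i) {x, y, d} d ↔ u i x < u i d ∧ u i y < u i d := by
        rw [hIU i _ (by simp)]
        constructor
        · intro h; exact ⟨h x (by simp) hxd, h y (by simp) hyd⟩
        · intro h z hz hzd
          simp only [Finset.mem_insert, Finset.mem_singleton] at hz
          rcases hz with rfl | rfl | rfl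
          · exact h.1
          · exact h.2
          · exact absurd rfl hzd
      simp [this]
    have e4 : p Finset.univ =
        ∑ i, if u i a < u i d ∧ u i b < u i d ∧ u i c < u i d then ρ i else 0 := by
      rw [hp Finset.univ (memD _ (Finset.mem_univ d) (by rw [card4]; omega)), Finset.sum_filter]
      apply Finset.sum_congr rfl
      intro i _
      have : IsUniqueMax (u i) Finset.univ d ↔
          u i a < u i d ∧ u i b < u i d ∧ u i c < u i d := by
        rw [hIU i _ (Finset.mem_univ d)]
        constructor
        · intro h
          exact ⟨h a (Finset.mem_univ a) had, h b (Finset.mem_univ b) hbd,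
            h c (Finset.mem_univ c) hcd⟩
        · intro h z _ hzd
          have hz := huniv ▸ Finset.mem_univ z
          simp only [Finset.mem_insert, Finset.mem_singleton] at hz
          rcases hz with rfl | rfl | rfl | rfl
          · exact h.1
          · exact h.2.1
          · exact h.2.2
          · exact absurd rfl hzd
      simp [this]
    -- pointwise inclusion-exclusion bound
    have key : ∀ i : Fin n,
        ((if u i a < u i d then ρ i else 0) + (if u i b < u i d then ρ i else 0)
          + (if u i c < u i d then ρ i else 0)
          - (if u i a < u i d ∧ u i b < u i d then ρ i else 0)
          - (if u i a < u i d ∧ u i c < u i d then ρ i else 0)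
          - (if u i b < u i d ∧ u i c < u i d then ρ i else 0)
          + (if u i a < u i d ∧ u i b < u i d ∧ u i c < u i d then ρ i else 0)) ≤ ρ i := by
      intro i
      have := hρ0 i
      by_cases Pa : u i a < u i d <;> by_cases Pb : u i b < u i d <;>
        by_cases Pc : u i c < u i d <;> simp [Pa, Pb, Pc] <;> linarith
    have hsum := Finset.sum_le_sum (fun i (_ : i ∈ Finset.univ) => key i)
    rw [hρ1] at hsum
    have hsplit : ∑ i, ((if u i a < u i d then ρ i else 0) + (if u i b < u i d then ρ i else 0)
          + (if u i c < u i d then ρ i else 0)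
          - (if u i a < u i d ∧ u i b < u i d then ρ i else 0)
          - (if u i a < u i d ∧ u i c < u i d then ρ i else 0)
          - (if u i b < u i d ∧ u i c < u i d then ρ i else 0)
          + (if u i a < u i d ∧ u i b < u i d ∧ u i c < u i d then ρ i else 0))
        = (∑ i, if u i a < u i d then ρ i else 0) + (∑ i, if u i b < u i d then ρ i else 0)
          + (∑ i, if u i c < u i d then ρ i else 0)
          - (∑ i, if u i a < u i d ∧ u i b < u i d then ρ i else 0)
          - (∑ i, if u i a < u i d ∧ u i c < u i d then ρ i else 0)
          - (∑ i, if u i b < u i d ∧ u i c < u i d then ρ i else 0)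
          + (∑ i, if u i a < u i d ∧ u i b < u i d ∧ u i c < u i d then ρ i else 0) := by
      simp [Finset.sum_add_distrib, Finset.sum_sub_distrib]
    rw [hsplit] at hsum
    rw [← e2 a had, ← e2 b hbd, ← e2 c hcd, ← e3 a b hab had hbd, ← e3 a c hac had hcd,
      ← e3 b c hbc hbd hcd, ← e4] at hsum
    rw [h2 a (by simp), h2 b (by simp), h2 c (by simp),
      h3 a (by simp) b (by simp) hab, h3 a (by simp) c (by simp) hac,
      h3 b (by simp) c (by simp) hbc, hX] at hsum
    norm_num at hsum
end

section
/- Let Ω be a symmetric positive definite m × m real matrix with induced inner product ⟨x, y⟩_Ω = xᵀΩy, let C̃ ⊆ ℝ^m be a closed convex cone, let π ∈ ℝ^m, and let η̃ be the point of C̃ minimizing ⟨π − η, π − η⟩_Ω over η ∈ C̃. If a ∈ ℝ^m satisfies ⟨π − η̃, a − η̃⟩_Ω > 0, then the infimum of ⟨π − η, π − η⟩_Ω over η in the convex cone generated by C̃ ∪ {a} is strictly smaller than ⟨π − η̃, π − η̃⟩_Ω. -/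
open Matrix

/-- The inner product on `ℝ^m` induced by the positive definite matrix `Ω`. -/
def innOmega {m : ℕ} (Ω : Matrix (Fin m) (Fin m) ℝ) (x y : Fin m → ℝ) : ℝ :=
  x ⬝ᵥ Ω.mulVec y

/-- The convex cone generated by a set `S ⊆ ℝ^m`: all finite nonnegative linear
combinations of elements of `S`. -/
def genCone {m : ℕ} (S : Set (Fin m → ℝ)) : Set (Fin m → ℝ) :=
  {x | ∃ (n : ℕ) (v : Fin n → Fin m → ℝ) (t : Fin n → ℝ),
    (∀ i, v i ∈ S) ∧ (∀ i, 0 ≤ t i) ∧ x = ∑ i, t i • v i}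

lemma innOmega_symm {m : ℕ} {Ω : Matrix (Fin m) (Fin m) ℝ} (hsym : Ω.IsSymm)
    (x y : Fin m → ℝ) : innOmega Ω x y = innOmega Ω y x := by
  unfold innOmega
  rw [dotProduct_mulVec, ← mulVec_transpose, hsym.eq, dotProduct_comm]

lemma innOmega_smul_right {m : ℕ} (Ω : Matrix (Fin m) (Fin m) ℝ) (t : ℝ)
    (x y : Fin m → ℝ) : innOmega Ω x (t • y) = t * innOmega Ω x y := by
  unfold innOmega; rw [mulVec_smul, dotProduct_smul, smul_eq_mul]

lemma innOmega_sub_right {m : ℕ} (Ω : Matrix (Fin m) (Fin m) ℝ)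
    (x y z : Fin m → ℝ) : innOmega Ω x (y - z) = innOmega Ω x y - innOmega Ω x z := by
  unfold innOmega; rw [mulVec_sub, dotProduct_sub]

lemma innOmega_nonneg {m : ℕ} {Ω : Matrix (Fin m) (Fin m) ℝ} (hpos : Ω.PosDef)
    (x : Fin m → ℝ) : 0 ≤ innOmega Ω x x := by
  have := hpos.posSemidef.dotProduct_mulVec_nonneg x
  simpa [innOmega] using this

/-- if `η` is the `Ω`-projection of `π` onto a closed convex cone `C` and
`⟨π − η, a − η⟩_Ω > 0`, then adjoining `a` to the cone strictly reduces the minimal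
`Ω`-distance squared from `π`. -/
theorem pricing_improvement {m : ℕ}
    (Ω : Matrix (Fin m) (Fin m) ℝ) (hsym : Ω.IsSymm) (hpos : Ω.PosDef)
    (C : Set (Fin m → ℝ)) (hclosed : IsClosed C) (hconv : Convex ℝ C)
    (hcone : ∀ x ∈ C, ∀ t : ℝ, 0 ≤ t → t • x ∈ C)
    (π η : Fin m → ℝ) (hη : η ∈ C)
    (hmin : ∀ c ∈ C, innOmega Ω (π - η) (π - η) ≤ innOmega Ω (π - c) (π - c))
    (a : Fin m → ℝ) (ha : 0 < innOmega Ω (π - η) (a - η)) :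
    sInf {q : ℝ | ∃ x ∈ genCone (C ∪ {a}), q = innOmega Ω (π - x) (π - x)} <
      innOmega Ω (π - η) (π - η) := by
  set u := π - η with hu
  set w := a - η with hw
  set b := innOmega Ω u w with hb
  set c := innOmega Ω w w with hc
  have hcnn : 0 ≤ c := innOmega_nonneg hpos w
  set t0 : ℝ := min 1 (b / (c + 1)) with ht0def
  have hc1 : (0:ℝ) < c + 1 := by linarith
  have ht0pos : 0 < t0 := lt_min one_pos (div_pos ha hc1)
  have ht0le1 : t0 ≤ 1 := min_le_left _ _
  have ht0le : t0 * (c + 1) ≤ b := by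
    have h := min_le_right 1 (b / (c + 1))
    calc t0 * (c + 1) ≤ (b / (c + 1)) * (c + 1) := by
          exact mul_le_mul_of_nonneg_right h (le_of_lt hc1)
      _ = b := div_mul_cancel₀ b (ne_of_gt hc1)
  -- the candidate point
  set x : Fin m → ℝ := η + t0 • w with hx
  have hxmem : x ∈ genCone (C ∪ {a}) := by
    refine ⟨2, ![η, a], ![1 - t0, t0], ?_, ?_, ?_⟩
    · intro i
      fin_cases i
      · exact Set.mem_union_left _ hη
      · exact Set.mem_union_right _ rfl
    · intro i
      fin_cases i
      · simpa using by linarith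
      · simpa using le_of_lt ht0pos
    · rw [Fin.sum_univ_two]
      simp only [Matrix.cons_val_zero, Matrix.cons_val_one, Matrix.head_cons]
      funext i
      simp [hx, hw, Pi.add_apply, Pi.smul_apply, Pi.sub_apply, smul_eq_mul]
      ring
  have hπx : π - x = u - t0 • w := by
    funext i
    simp [hx, hu, Pi.add_apply, Pi.smul_apply, Pi.sub_apply, smul_eq_mul]
    ring
  have e1 : ∀ z, innOmega Ω (u - t0 • w) z = innOmega Ω z u - t0 * innOmega Ω z w := by
    intro z
    rw [innOmega_symm hsym, innOmega_sub_right, innOmega_smul_right]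
  have hQ : innOmega Ω (π - x) (π - x)
      = innOmega Ω u u - 2 * t0 * b + t0 ^ 2 * c := by
    rw [hπx]
    simp only [e1]
    rw [innOmega_symm hsym w u]
    ring
  have hlt : innOmega Ω (π - x) (π - x) < innOmega Ω u u := by
    rw [hQ]
    nlinarith [mul_pos ht0pos ha, sq_nonneg t0]
  have hS : innOmega Ω (π - x) (π - x) ∈
      {q : ℝ | ∃ x ∈ genCone (C ∪ {a}), q = innOmega Ω (π - x) (π - x)} :=
    ⟨x, hxmem, rfl⟩
  have hbdd : BddBelow {q : ℝ | ∃ x ∈ genCone (C ∪ {a}), q = innOmega Ω (π - x) (π - x)} := by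
    refine ⟨0, ?_⟩
    rintro q ⟨y, _, rfl⟩
    exact innOmega_nonneg hpos _
  exact lt_of_le_of_lt (csInf_le hbdd hS) hlt
end

section
/- Let Ω be a symmetric positive definite m × m real matrix, let M be an m × H real matrix, and let π ∈ ℝ^m. Then the minimum over ν ≥ 0 of (π − Mν)ᵀ Ω (π − Mν) is attained, and moreover it is attained at some ν* ≥ 0 having at most m nonzero coordinates. -/
open Matrix
open scoped Classical

lemma mulVec_eq_sum' {m H : ℕ} (M : Matrix (Fin m) (Fin H) ℝ) (v : Fin H → ℝ) :
    M.mulVec v = ∑ j, v j • M.transpose j := by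
  funext i
  simp [Matrix.mulVec, dotProduct, Finset.sum_apply, Matrix.transpose_apply, mul_comm]

/-- one reduction step -/
lemma reduce_step {m H : ℕ} (M : Matrix (Fin m) (Fin H) ℝ) (ν c : Fin H → ℝ)
    (hν : 0 ≤ ν) (hsupp : ∀ j, c j ≠ 0 → ν j ≠ 0) (hMc : M.mulVec c = 0)
    (hcpos : ∃ j, 0 < c j) :
    ∃ ν' : Fin H → ℝ, 0 ≤ ν' ∧ M.mulVec ν' = M.mulVec ν ∧
      (Finset.univ.filter (fun i => ν' i ≠ 0)) ⊂ (Finset.univ.filter (fun i => ν i ≠ 0)) := by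
  obtain ⟨j₁, hj₁⟩ := hcpos
  set P : Finset (Fin H) := Finset.univ.filter (fun j => 0 < c j) with hP
  have hPne : P.Nonempty := ⟨j₁, by simp [hP, hj₁]⟩
  obtain ⟨j₀, hj₀P, hj₀min⟩ := P.exists_min_image (fun j => ν j / c j) hPne
  have hcj₀ : 0 < c j₀ := by simpa [hP] using hj₀P
  set t : ℝ := ν j₀ / c j₀ with ht
  have ht0 : 0 ≤ t := div_nonneg (hν j₀) hcj₀.le
  have hν' : ∀ j, 0 ≤ ν j := fun j => by simpa using hν j
  refine ⟨ν - t • c, ?_, ?_, ?_⟩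
  · intro j
    simp only [Pi.sub_apply, Pi.smul_apply, smul_eq_mul, Pi.zero_apply]
    rcases le_or_gt (c j) 0 with hc | hc
    · have : t * c j ≤ 0 := mul_nonpos_of_nonneg_of_nonpos ht0 hc
      linarith [hν' j]
    · have hjP : j ∈ P := by simp [hP, hc]
      have h1 := hj₀min j hjP
      have : t * c j ≤ ν j := by
        rw [← le_div_iff₀ hc]; exact h1
      linarith
  · rw [Matrix.mulVec_sub, Matrix.mulVec_smul, hMc]; simp
  · constructor
    · intro j hj
      simp only [Finset.mem_filter, Finset.mem_univ, true_and] at hj ⊢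
      intro hνj
      have hcj : c j = 0 := by
        by_contra h; exact (hsupp j h) hνj
      simp [hνj, hcj] at hj
    · intro hsub
      have hj₀mem : j₀ ∈ Finset.univ.filter (fun i => ν i ≠ 0) := by
        simp only [Finset.mem_filter, Finset.mem_univ, true_and]
        exact hsupp j₀ hcj₀.ne'
      have := hsub hj₀mem
      simp only [Finset.mem_filter, Finset.mem_univ, true_and, Pi.sub_apply, Pi.smul_apply,
        smul_eq_mul] at this
      apply this
      rw [ht]; field_simp; ring

/-- conic Carathéodory: sparse representation with linearly independent support columns -/
lemma carath {m H : ℕ} (M : Matrix (Fin m) (Fin H) ℝ) (ν : Fin H → ℝ) (hν : 0 ≤ ν) :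
    ∃ ν' : Fin H → ℝ, 0 ≤ ν' ∧ M.mulVec ν' = M.mulVec ν ∧
      LinearIndependent ℝ (fun i : {i // ν' i ≠ 0} => M.transpose i.1) := by
  generalize hn : (Finset.univ.filter (fun i => ν i ≠ 0)).card = n
  induction n using Nat.strong_induction_on generalizing ν with
  | _ n ih =>
    by_cases hli : LinearIndependent ℝ (fun i : {i // ν i ≠ 0} => M.transpose i.1)
    · exact ⟨ν, hν, rfl, hli⟩
    · rw [Fintype.not_linearIndependent_iff] at hli
      obtain ⟨g, hgsum, i₀, hgi₀⟩ := hli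
      set c : Fin H → ℝ := fun j => if h : ν j ≠ 0 then g ⟨j, h⟩ else 0 with hc
      have hsupp : ∀ j, c j ≠ 0 → ν j ≠ 0 := by
        intro j hcj
        by_contra h; simp [hc, h] at hcj
      have hMc : M.mulVec c = 0 := by
        rw [mulVec_eq_sum']
        have h1 : ∑ j, c j • M.transpose j
            = ∑ j ∈ Finset.univ.filter (fun i => ν i ≠ 0), c j • M.transpose j := by
          symm
          apply Finset.sum_subset (Finset.filter_subset _ _)
          intro j _ hj
          simp only [Finset.mem_filter, Finset.mem_univ, true_and, not_not] at hj
          simp [hc, hj]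
        have h2 : ∑ j ∈ Finset.univ.filter (fun i => ν i ≠ 0), c j • M.transpose j
            = ∑ i : {i // ν i ≠ 0}, g i • M.transpose i.1 := by
          rw [Finset.sum_subtype (p := fun i => ν i ≠ 0) _ (fun x => by simp) (fun j => c j • M.transpose j)]
          apply Finset.sum_congr rfl
          intro i _
          simp [hc, i.2]
        rw [h1, h2, hgsum]
      have hkey : ∃ ν'' : Fin H → ℝ, 0 ≤ ν'' ∧ M.mulVec ν'' = M.mulVec ν ∧
          (Finset.univ.filter (fun i => ν'' i ≠ 0)) ⊂ (Finset.univ.filter (fun i => ν i ≠ 0)) := by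
        have hci₀ : c i₀.1 ≠ 0 := by simp [hc, i₀.2, hgi₀]
        rcases hci₀.lt_or_gt with hneg | hpos
        · have hsupp' : ∀ j, (-c) j ≠ 0 → ν j ≠ 0 := by
            intro j hj; exact hsupp j (by simpa using hj)
          have hMc' : M.mulVec (-c) = 0 := by rw [Matrix.mulVec_neg, hMc, neg_zero]
          exact reduce_step M ν (-c) hν hsupp' hMc' ⟨i₀.1, by simpa using hneg⟩
        · exact reduce_step M ν c hν hsupp hMc ⟨i₀.1, hpos⟩
      obtain ⟨ν'', h0, hMeq, hsub⟩ := hkey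
      have hcard : (Finset.univ.filter (fun i => ν'' i ≠ 0)).card < n := by
        rw [← hn]; exact Finset.card_lt_card hsub
      obtain ⟨ν', h0', hMeq', hli'⟩ := ih _ hcard ν'' h0 rfl
      exact ⟨ν', h0', by rw [hMeq', hMeq], hli'⟩

lemma mulVec_eq_sum'' {m : ℕ} {n : Type*} [Fintype n] (A : Matrix (Fin m) n ℝ) (v : n → ℝ) :
    A.mulVec v = ∑ j, v j • A.transpose j := by
  funext i
  simp [Matrix.mulVec, dotProduct, Finset.sum_apply, Matrix.transpose_apply, mul_comm]

lemma cone_closed {m H : ℕ} (M : Matrix (Fin m) (Fin H) ℝ) :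
    IsClosed {x : Fin m → ℝ | ∃ ν : Fin H → ℝ, 0 ≤ ν ∧ M.mulVec ν = x} := by
  have hTr : ∀ (S : Finset (Fin H)) (j : S),
      (M.submatrix id (Subtype.val : S → Fin H)).transpose j = M.transpose j.1 :=
    fun S j => rfl
  have hEq : {x : Fin m → ℝ | ∃ ν : Fin H → ℝ, 0 ≤ ν ∧ M.mulVec ν = x}
      = ⋃ (S : Finset (Fin H)) (_ : LinearIndependent ℝ (fun i : S => M.transpose i.1)),
        (M.submatrix id (Subtype.val : S → Fin H)).mulVecLin '' {μ | 0 ≤ μ} := by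
    ext x
    simp only [Set.mem_setOf_eq, Set.mem_iUnion, Set.mem_image]
    constructor
    · rintro ⟨ν, hν, rfl⟩
      obtain ⟨ν', hν', hMeq, hli⟩ := carath M ν hν
      set S : Finset (Fin H) := Finset.univ.filter (fun i => ν' i ≠ 0) with hS
      have hmemiff : ∀ i : Fin H, i ∈ S ↔ ν' i ≠ 0 := by simp [hS]
      have hli2 : LinearIndependent ℝ (fun i : S => M.transpose i.1) :=
        hli.comp (Equiv.subtypeEquivRight hmemiff) (Equiv.subtypeEquivRight hmemiff).injective
      refine ⟨S, hli2, fun i => ν' i.1, fun i => by simpa using hν' i.1, ?_⟩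
      rw [Matrix.mulVecLin_apply, mulVec_eq_sum'' (M.submatrix id (Subtype.val : S → Fin H)),
        ← hMeq, mulVec_eq_sum']
      simp only [hTr S]
      rw [Finset.sum_coe_sort S (fun j => ν' j • M.transpose j)]
      apply Finset.sum_subset (Finset.subset_univ S)
      intro j _ hj
      simp only [hS, Finset.mem_filter, Finset.mem_univ, true_and, not_not] at hj
      simp [hj]
    · rintro ⟨S, hli, μ, hμ, rfl⟩
      refine ⟨fun j => if h : j ∈ S then μ ⟨j, h⟩ else 0, ?_, ?_⟩
      · intro j
        by_cases h : j ∈ S <;> simp [h]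
        exact hμ ⟨j, h⟩
      · rw [Matrix.mulVecLin_apply,
          mulVec_eq_sum'' (M.submatrix id (Subtype.val : S → Fin H)), mulVec_eq_sum']
        simp only [hTr S]
        have : ∀ j : S, μ j • M.transpose j.1
            = (fun j => if h : j ∈ S then μ ⟨j, h⟩ else 0) j.1 • M.transpose j.1 := by
          intro j; simp [j.2]
        rw [Fintype.sum_congr _ _ this,
          Finset.sum_coe_sort S (fun j => (fun j => if h : j ∈ S then μ ⟨j, h⟩ else 0) j • M.transpose j)]
        symm
        apply Finset.sum_subset (Finset.subset_univ S)
        intro j _ hj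
        simp [hj]
  rw [hEq]
  apply isClosed_iUnion_of_finite
  intro S
  apply isClosed_iUnion_of_finite
  intro hli
  have hker : LinearMap.ker (M.submatrix id (Subtype.val : S → Fin H)).mulVecLin = ⊥ := by
    rw [LinearMap.ker_eq_bot']
    intro μ hμ
    rw [Matrix.mulVecLin_apply, mulVec_eq_sum''] at hμ
    simp only [hTr S] at hμ
    have := Fintype.linearIndependent_iff.mp hli μ hμ
    funext i; exact this i
  have hce := LinearMap.isClosedEmbedding_of_injective hker
  exact hce.isClosedMap _ (isClosed_Ici (a := (0 : S → ℝ)))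

lemma quad_smul {m : ℕ} (Ω : Matrix (Fin m) (Fin m) ℝ) (a : ℝ) (v : Fin m → ℝ) :
    (a • v) ⬝ᵥ Ω.mulVec (a • v) = a ^ 2 * (v ⬝ᵥ Ω.mulVec v) := by
  rw [Matrix.mulVec_smul, smul_dotProduct, dotProduct_smul]
  simp [smul_eq_mul]; ring

lemma posdef_coercive {m : ℕ} (Ω : Matrix (Fin m) (Fin m) ℝ) (hpos : Ω.PosDef) :
    ∃ c > 0, ∀ v : Fin m → ℝ, c * ‖v‖ ^ 2 ≤ v ⬝ᵥ Ω.mulVec v := by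
  have hq : Continuous fun v : Fin m → ℝ => v ⬝ᵥ Ω.mulVec v := by
    simp only [dotProduct, Matrix.mulVec]
    apply continuous_finset_sum
    intro i _
    exact (continuous_apply i).mul (continuous_finset_sum _ fun j _ =>
      continuous_const.mul (continuous_apply j))
  have hqpos : ∀ v : Fin m → ℝ, v ≠ 0 → 0 < v ⬝ᵥ Ω.mulVec v := by
    intro v hv
    simpa using (Matrix.posDef_iff_dotProduct_mulVec.mp hpos).2 hv
  rcases Nat.eq_zero_or_pos m with hm | hm
  · subst hm
    refine ⟨1, one_pos, fun v => ?_⟩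
    have hv : v = 0 := Subsingleton.elim _ _
    rw [hv, norm_zero]
    simp [dotProduct]
  · have : Nonempty (Fin m) := ⟨⟨0, hm⟩⟩
    have hsph : (Metric.sphere (0 : Fin m → ℝ) 1).Nonempty := by
      refine ⟨fun _ => 1, ?_⟩
      simp [pi_norm_const]
    obtain ⟨u, huS, humin'⟩ := (isCompact_sphere (0 : Fin m → ℝ) 1).exists_isMinOn hsph
      hq.continuousOn
    have humin : ∀ w ∈ Metric.sphere (0 : Fin m → ℝ) 1,
        u ⬝ᵥ Ω.mulVec u ≤ w ⬝ᵥ Ω.mulVec w := fun w hw => humin' hw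
    have hu1 : ‖u‖ = 1 := by simpa using huS
    have hune : u ≠ 0 := by intro h; rw [h] at hu1; simp at hu1
    refine ⟨u ⬝ᵥ Ω.mulVec u, hqpos u hune, fun v => ?_⟩
    by_cases hv : v = 0
    · simp [hv, dotProduct]
    · have hnv : 0 < ‖v‖ := norm_pos_iff.mpr hv
      have hw : (‖v‖⁻¹ • v) ∈ Metric.sphere (0 : Fin m → ℝ) 1 := by
        simp [norm_smul, abs_of_pos (inv_pos.mpr hnv), inv_mul_cancel₀ hnv.ne']
      have h1 := humin _ hw
      rw [quad_smul] at h1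
      have h4 : ‖v‖⁻¹ ^ 2 * (v ⬝ᵥ Ω.mulVec v) * ‖v‖ ^ 2 = v ⬝ᵥ Ω.mulVec v := by
        field_simp
      linarith [mul_le_mul_of_nonneg_right h1 (sq_nonneg ‖v‖), h4]

/-- for a symmetric positive definite `Ω`, an `m × H` matrix `M` and
`π ∈ ℝ^m`, the minimum over `ν ≥ 0` of `(π − Mν)ᵀ Ω (π − Mν)` is attained, and is attained
at some `ν ≥ 0` with at most `m` nonzero coordinates (a sparse minimizer). -/
theorem sparse_minimizer_exists {m H : ℕ}
    (Ω : Matrix (Fin m) (Fin m) ℝ) (hsym : Ω.IsSymm) (hpos : Ω.PosDef)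
    (M : Matrix (Fin m) (Fin H) ℝ) (π : Fin m → ℝ) :
    ∃ ν : Fin H → ℝ, 0 ≤ ν ∧
      (∀ ν' : Fin H → ℝ, 0 ≤ ν' →
        (π - M.mulVec ν) ⬝ᵥ Ω.mulVec (π - M.mulVec ν) ≤
          (π - M.mulVec ν') ⬝ᵥ Ω.mulVec (π - M.mulVec ν')) ∧
      (Finset.univ.filter (fun i => ν i ≠ 0)).card ≤ m := by
  set C := {x : Fin m → ℝ | ∃ ν : Fin H → ℝ, 0 ≤ ν ∧ M.mulVec ν = x} with hC
  have hCclosed := cone_closed M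
  obtain ⟨c, hc, hcoer⟩ := posdef_coercive Ω hpos
  set g : (Fin m → ℝ) → ℝ := fun x => (π - x) ⬝ᵥ Ω.mulVec (π - x) with hg
  have hgcont : Continuous g := by
    have hq : Continuous fun v : Fin m → ℝ => v ⬝ᵥ Ω.mulVec v := by
      simp only [dotProduct, Matrix.mulVec]
      apply continuous_finset_sum
      intro i _
      exact (continuous_apply i).mul (continuous_finset_sum _ fun j _ =>
        continuous_const.mul (continuous_apply j))
    exact hq.comp (continuous_const.sub continuous_id)
  have hgcoer : ∀ x, c * ‖π - x‖ ^ 2 ≤ g x := fun x => hcoer _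
  have hg0 : 0 ≤ g 0 := le_trans (by positivity) (hgcoer 0)
  set R : ℝ := ‖π‖ + Real.sqrt (g 0 / c) with hR
  set K := C ∩ Metric.closedBall 0 R with hK
  have h0C : (0 : Fin m → ℝ) ∈ C := ⟨0, le_refl 0, Matrix.mulVec_zero M⟩
  have h0K : (0 : Fin m → ℝ) ∈ K := by
    refine ⟨h0C, ?_⟩
    simp only [Metric.mem_closedBall, dist_zero_right, norm_zero, hR]
    positivity
  have hKcompact : IsCompact K := by
    apply (isCompact_closedBall (0 : Fin m → ℝ) R).of_isClosed_subset
      (hCclosed.inter Metric.isClosed_closedBall) Set.inter_subset_right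
  obtain ⟨xs, hxsK, hmin⟩ := hKcompact.exists_isMinOn ⟨0, h0K⟩ hgcont.continuousOn
  have hglobal : ∀ x ∈ C, g xs ≤ g x := by
    intro x hx
    by_cases hxK : x ∈ Metric.closedBall (0 : Fin m → ℝ) R
    · exact hmin ⟨hx, hxK⟩
    · have hxR : R < ‖x‖ := by
        simp only [Metric.mem_closedBall, dist_zero_right, not_le] at hxK
        exact hxK
      have h1 : Real.sqrt (g 0 / c) < ‖π - x‖ := by
        have h2 : ‖x‖ - ‖π‖ ≤ ‖π - x‖ := by
          have := norm_sub_norm_le x π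
          rw [norm_sub_rev x π] at this
          linarith
        rw [hR] at hxR
        linarith
      have h2 : g 0 / c < ‖π - x‖ ^ 2 := by
        have hs := Real.sq_sqrt (div_nonneg hg0 hc.le)
        nlinarith [Real.sqrt_nonneg (g 0 / c)]
      have h3 : g 0 < g x := by
        have h4 : c * (g 0 / c) < c * ‖π - x‖ ^ 2 := (mul_lt_mul_iff_right₀ hc).2 h2
        rw [mul_div_cancel₀ _ hc.ne'] at h4
        linarith [hgcoer x]
      exact le_trans (hmin h0K) h3.le
  obtain ⟨ν₀, hν₀, hMν₀⟩ := hxsK.1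
  obtain ⟨ν, hν, hMν, hli⟩ := carath M ν₀ hν₀
  refine ⟨ν, hν, ?_, ?_⟩
  · intro ν' hν'
    have h5 : g (M.mulVec ν) ≤ g (M.mulVec ν') := by
      rw [hMν, hMν₀]
      exact hglobal _ ⟨ν', hν', rfl⟩
    simpa [hg] using h5
  · have hcard := hli.fintype_card_le_finrank
    rw [Fintype.card_subtype] at hcard
    simpa [Module.finrank_fin_fun] using hcard
end
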